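/- Let s ≥ 1, let U be a closed subspace of H, let û ∈ H, and let u ∈ U satisfy the weak problem of the single-stage (s = (ω+1)/ω) or two-stage (s = 1) method: s·⟨u − P u, v⟩ + ⟨P u, v⟩ = ⟨P û, v⟩ for all v ∈ U. Then ‖u − û‖ ≤ s · (inf over v ∈ U of ‖v − û‖) + (s + 1) · (inf over w ∈ Z of ‖T*w − û‖). -/

import Mathlib

open scoped RealInnerProductSpace

/-- error estimate for the single- and two-stage methods: for `s ≥ 1`,
if `u ∈ U` satisfies `s⟪u − Pu, v⟫ + ⟪Pu, v⟫ = ⟪Pû, v⟫` for all `v ∈ U`, then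
`‖u − û‖ ≤ s inf_{v ∈ U} ‖v − û‖ + (s+1) inf_{w ∈ Z} ‖T†w − û‖`. -/
theorem stage_methods_error_estimate
    {H : Type*} [NormedAddCommGroup H] [InnerProductSpace ℝ H] [CompleteSpace H]
    (T : H →ₗ.[ℝ] H) (hdense : Dense (T.domain : Set H)) (hclosed : T.IsClosed)
    (Z : Submodule ℝ T.adjoint.domain) [FiniteDimensional ℝ Z]
    (W : Submodule ℝ H) (hW : W = Z.map T.adjoint.toFun)
    (P : H →ₗ[ℝ] H) (hPmem : ∀ q : H, P q ∈ W)
    (hPorth : ∀ q : H, ∀ w ∈ W, ⟪q - P q, w⟫ = 0)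
    (s : ℝ) (hs : 1 ≤ s)
    (U : Submodule ℝ H) (hUclosed : IsClosed (U : Set H))
    (uhat u : H) (hu : u ∈ U)
    (hweak : ∀ v ∈ U, s * ⟪u - P u, v⟫ + ⟪P u, v⟫ = ⟪P uhat, v⟫) :
    ‖u - uhat‖ ≤ s * (⨅ v : U, ‖(v : H) - uhat‖) +
      (s + 1) * (⨅ w : Z, ‖T.adjoint (w : T.adjoint.domain) - uhat‖) := by
  have hs0 : (0:ℝ) < s := by linarith
  set e := u - uhat with he
  set δ := ‖uhat - P uhat‖ with hδdef
  have hδ0 : 0 ≤ δ := norm_nonneg _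
  -- best approximation property of the projection
  have hbest : ∀ q ∈ W, δ ≤ ‖uhat - q‖ := by
    intro q hq
    have h1 : ⟪uhat - P uhat, P uhat - q⟫ = 0 :=
      hPorth uhat _ (sub_mem (hPmem uhat) hq)
    have h3 : (uhat - P uhat) + (P uhat - q) = uhat - q := by abel
    have h2 : ‖uhat - q‖^2 = ‖uhat - P uhat‖^2 + ‖P uhat - q‖^2 := by
      rw [← h3, norm_add_sq_real, h1]; ring
    nlinarith [norm_nonneg (uhat - q), norm_nonneg (uhat - P uhat),
      norm_nonneg (P uhat - q)]
  -- ‖e - P e‖ ≤ ‖e‖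
  have h1e : ⟪e - P e, P e⟫ = 0 := hPorth e _ (hPmem e)
  have hePe : ‖e - P e‖ ≤ ‖e‖ := by
    have h3 : (e - P e) + P e = e := by abel
    have h2 : ‖e‖^2 = ‖e - P e‖^2 + ‖P e‖^2 := by
      have h3' : ‖e‖ = ‖(e - P e) + P e‖ := by rw [h3]
      rw [h3', norm_add_sq_real, h1e]; ring
    nlinarith [norm_nonneg (e - P e), norm_nonneg e, norm_nonneg (P e)]
  -- the key quadratic inequality
  have key : ∀ v₀ ∈ U, ‖e‖^2 ≤ s*‖e‖*‖v₀ - uhat‖ + s*δ*‖e‖ + s*δ*‖v₀ - uhat‖ := by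
    intro v₀ hv₀
    set d := v₀ - uhat with hd
    have hv : u - v₀ ∈ U := sub_mem hu hv₀
    have hw' := hweak (u - v₀) hv
    have hved : u - v₀ = e - d := by rw [he, hd]; abel
    rw [hved] at hw'
    have hPe : P e = P u - P uhat := by rw [he, map_sub]
    have heq : ⟪e, e - d⟫ = -(s-1) * ⟪e - P e, e - d⟫ + s * ⟪P uhat - uhat, e - d⟫ := by
      simp only [he, hPe, map_sub, inner_sub_left] at hw' ⊢
      linear_combination hw'
    -- expand both sides
    have hexp1 : ⟪e, e - d⟫ = ‖e‖^2 - ⟪e, d⟫ := by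
      rw [inner_sub_right, real_inner_self_eq_norm_sq]
    have hexp2 : ⟪e - P e, e - d⟫ = ‖e - P e‖^2 - ⟪e - P e, d⟫ := by
      have h4 : ⟪e - P e, e⟫ = ‖e - P e‖^2 := by
        have h5 : (e - P e) + P e = e := by abel
        have h6 : ⟪e - P e, e⟫ = ⟪e - P e, (e - P e) + P e⟫ := by rw [h5]
        rw [h6, inner_add_right, h1e, real_inner_self_eq_norm_sq]; ring
      rw [inner_sub_right, h4]
    have hCS1 : ⟪e, d⟫ ≤ ‖e‖ * ‖d‖ := real_inner_le_norm e d
    have hCS2 : ⟪e - P e, d⟫ ≤ ‖e - P e‖ * ‖d‖ := real_inner_le_norm _ _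
    have hCS3 : ⟪P uhat - uhat, e - d⟫ ≤ δ * (‖e‖ + ‖d‖) := by
      calc ⟪P uhat - uhat, e - d⟫ ≤ ‖P uhat - uhat‖ * ‖e - d‖ := real_inner_le_norm _ _
        _ = δ * ‖e - d‖ := by rw [norm_sub_rev, hδdef]
        _ ≤ δ * (‖e‖ + ‖d‖) := by
            exact mul_le_mul_of_nonneg_left (norm_sub_le e d) hδ0
    have hd0 : (0:ℝ) ≤ ‖d‖ := norm_nonneg _
    have hsq : (0:ℝ) ≤ ‖e - P e‖^2 := sq_nonneg _
    rw [hexp1, hexp2] at heq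
    nlinarith [mul_le_mul_of_nonneg_left hCS2 (by linarith : (0:ℝ) ≤ s - 1),
      mul_le_mul_of_nonneg_left hCS3 (le_of_lt hs0),
      mul_le_mul_of_nonneg_right hePe hd0,
      mul_le_mul_of_nonneg_left hsq (by linarith : (0:ℝ) ≤ s - 1)]
  -- linear estimate
  have est : ∀ v₀ ∈ U, ‖e‖ ≤ s * ‖v₀ - uhat‖ + (s+1) * δ := by
    intro v₀ hv₀
    have hk := key v₀ hv₀
    have hE : (0:ℝ) ≤ ‖e‖ := norm_nonneg _
    have hD : (0:ℝ) ≤ ‖v₀ - uhat‖ := norm_nonneg _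
    by_contra hcon
    push_neg at hcon
    have hEpos : 0 < ‖e‖ := by nlinarith
    nlinarith [mul_pos hEpos (by nlinarith : (0:ℝ) < ‖e‖ - s*‖v₀ - uhat‖ - (s+1)*δ),
      mul_nonneg hδ0 (by nlinarith : (0:ℝ) ≤ ‖e‖ - s*‖v₀ - uhat‖)]
  -- δ is bounded by the distance to every element of T* Z
  have hZb : ∀ w : Z, δ ≤ ‖T.adjoint (w : T.adjoint.domain) - uhat‖ := by
    intro w
    have hmem : T.adjoint (w : T.adjoint.domain) ∈ W := by
      rw [hW]; exact ⟨(w : T.adjoint.domain), w.2, rfl⟩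
    have := hbest _ hmem
    rwa [norm_sub_rev] at this
  haveI : Nonempty U := ⟨⟨0, zero_mem U⟩⟩
  haveI : Nonempty Z := ⟨⟨0, zero_mem Z⟩⟩
  have hδB : δ ≤ ⨅ w : Z, ‖T.adjoint (w : T.adjoint.domain) - uhat‖ := le_ciInf hZb
  have hA : (‖e‖ - (s+1)*δ)/s ≤ ⨅ v : U, ‖(v : H) - uhat‖ := by
    apply le_ciInf
    intro v
    rw [div_le_iff₀ hs0]
    have := est (v : H) v.2
    nlinarith
  rw [div_le_iff₀ hs0] at hA
  have hB : (s+1) * δ ≤ (s+1) * (⨅ w : Z, ‖T.adjoint (w : T.adjoint.domain) - uhat‖) :=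
    mul_le_mul_of_nonneg_left hδB (by linarith)
  show ‖e‖ ≤ _
  nlinarith [hA, hB]
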